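/- For all integers m1 ≥ 2 and m2 ≥ 1, ∫₀^{π/4} sin^{m1}(2x)·cos^{m2}(2x) / sin²(x) dx = (1/2)·[ B((m1−1)/2, (m2+1)/2) + B((m1−1)/2, (m2+2)/2) ]. -/

import Mathlib

open Real

/-- The Beta function `B(x, y) = Γ(x)·Γ(y)/Γ(x+y)`. -/
noncomputable def Beta (x y : ℝ) : ℝ := Real.Gamma x * Real.Gamma y / Real.Gamma (x + y)

lemma Beta_symm (x y : ℝ) : Beta x y = Beta y x := by
  unfold Beta; rw [mul_comm, add_comm]

lemma Beta_rec {x y : ℝ} (hx : 0 < x) (hy : 0 < y) :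
    Beta (x + 1) y = x / (x + y) * Beta x y := by
  unfold Beta
  have h1 : Real.Gamma (x + 1) = x * Real.Gamma x := Real.Gamma_add_one hx.ne'
  have h2 : x + 1 + y = (x + y) + 1 := by ring
  have h3 : Real.Gamma ((x + y) + 1) = (x + y) * Real.Gamma (x + y) :=
    Real.Gamma_add_one (by positivity)
  have h4 : Real.Gamma (x + y) ≠ 0 := (Real.Gamma_pos_of_pos (by positivity)).ne'
  rw [h1, h2, h3]
  field_simp

lemma G_symm (a b : ℕ) :
    (∫ x in (0:ℝ)..(Real.pi/2), Real.sin x ^ a * Real.cos x ^ b) =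
      ∫ x in (0:ℝ)..(Real.pi/2), Real.sin x ^ b * Real.cos x ^ a := by
  have := intervalIntegral.integral_comp_sub_left
    (fun x => Real.sin x ^ b * Real.cos x ^ a) (Real.pi/2) (a := 0) (b := Real.pi/2)
  simp only [Real.sin_pi_div_two_sub, Real.cos_pi_div_two_sub, sub_zero, sub_self] at this
  rw [← this]
  congr 1
  ext x
  ring

lemma G_parts (a b : ℕ) :
    (∫ x in (0:ℝ)..(Real.pi/2),
      ((a:ℝ)+1) * (Real.sin x ^ a * Real.cos x ^ (b+2))
        - ((b:ℝ)+1) * (Real.sin x ^ (a+2) * Real.cos x ^ b)) = 0 := by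
  have key : ∀ x ∈ Set.uIcc (0:ℝ) (Real.pi/2),
      HasDerivAt (fun y => Real.sin y ^ (a+1) * Real.cos y ^ (b+1))
        (((a:ℝ)+1) * (Real.sin x ^ a * Real.cos x ^ (b+2))
          - ((b:ℝ)+1) * (Real.sin x ^ (a+2) * Real.cos x ^ b)) x := by
    intro x _
    have h1 : HasDerivAt (fun y => Real.sin y ^ (a+1))
        (((a:ℝ)+1) * Real.sin x ^ a * Real.cos x) x := by
      have := (Real.hasDerivAt_sin x).fun_pow (a+1)
      simpa [mul_comm, mul_assoc, mul_left_comm] using this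
    have h2 : HasDerivAt (fun y => Real.cos y ^ (b+1))
        (-(((b:ℝ)+1) * Real.cos x ^ b * Real.sin x)) x := by
      have := (Real.hasDerivAt_cos x).fun_pow (b+1)
      simpa [mul_comm, mul_assoc, mul_left_comm] using this
    have := h1.fun_mul h2
    refine this.congr_deriv ?_
    ring
  have := intervalIntegral.integral_eq_sub_of_hasDerivAt key ?_
  · rw [this]; simp
  · apply Continuous.intervalIntegrable; fun_prop

lemma G_rec (a b : ℕ) :
    (∫ x in (0:ℝ)..(Real.pi/2), Real.sin x ^ (a+2) * Real.cos x ^ b) =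
      ((a:ℝ)+1) / ((a:ℝ)+(b:ℝ)+2) *
        ∫ x in (0:ℝ)..(Real.pi/2), Real.sin x ^ a * Real.cos x ^ b := by
  set I0 := ∫ x in (0:ℝ)..(Real.pi/2), Real.sin x ^ a * Real.cos x ^ b with hI0
  set I2 := ∫ x in (0:ℝ)..(Real.pi/2), Real.sin x ^ (a+2) * Real.cos x ^ b with hI2
  set J := ∫ x in (0:ℝ)..(Real.pi/2), Real.sin x ^ a * Real.cos x ^ (b+2) with hJ
  have int0 : IntervalIntegrable (fun x => Real.sin x ^ a * Real.cos x ^ b)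
      MeasureTheory.volume 0 (Real.pi/2) := by apply Continuous.intervalIntegrable; fun_prop
  have int2 : IntervalIntegrable (fun x => Real.sin x ^ (a+2) * Real.cos x ^ b)
      MeasureTheory.volume 0 (Real.pi/2) := by apply Continuous.intervalIntegrable; fun_prop
  have intJ : IntervalIntegrable (fun x => Real.sin x ^ a * Real.cos x ^ (b+2))
      MeasureTheory.volume 0 (Real.pi/2) := by apply Continuous.intervalIntegrable; fun_prop
  have hparts : ((a:ℝ)+1) * J - ((b:ℝ)+1) * I2 = 0 := by
    have := G_parts a b
    rwa [intervalIntegral.integral_sub (intJ.const_mul _) (int2.const_mul _),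
      intervalIntegral.integral_const_mul, intervalIntegral.integral_const_mul] at this
  have hJ0 : J = I0 - I2 := by
    rw [hJ, hI0, hI2, ← intervalIntegral.integral_sub int0 int2]
    apply intervalIntegral.integral_congr
    intro x _
    simp only [pow_add, Real.cos_sq']
    ring
  have hd : ((a:ℝ)+(b:ℝ)+2) ≠ 0 := by positivity
  rw [hJ0] at hparts
  field_simp
  linarith [hparts]

lemma G_rec' (a b : ℕ) :
    (∫ x in (0:ℝ)..(Real.pi/2), Real.sin x ^ a * Real.cos x ^ (b+2)) =
      ((b:ℝ)+1) / ((a:ℝ)+(b:ℝ)+2) *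
        ∫ x in (0:ℝ)..(Real.pi/2), Real.sin x ^ a * Real.cos x ^ b := by
  rw [G_symm, G_rec b a, G_symm b a]
  ring_nf

lemma key_step (a b : ℕ)
    (ih : (∫ x in (0:ℝ)..(Real.pi/2), Real.sin x ^ a * Real.cos x ^ b) =
      1/2 * Beta (((a:ℝ)+1)/2) (((b:ℝ)+1)/2)) :
    (∫ x in (0:ℝ)..(Real.pi/2), Real.sin x ^ a * Real.cos x ^ (b+2)) =
      1/2 * Beta (((a:ℝ)+1)/2) ((((b+2:ℕ):ℝ)+1)/2) := by
  have hx : (0:ℝ) < ((a:ℝ)+1)/2 := by positivity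
  have hy : (0:ℝ) < ((b:ℝ)+1)/2 := by positivity
  have hcast : (((b+2:ℕ):ℝ)+1)/2 = ((b:ℝ)+1)/2 + 1 := by push_cast; ring
  rw [hcast, Beta_symm _ (((b:ℝ)+1)/2 + 1), Beta_rec hy hx,
    Beta_symm (((b:ℝ)+1)/2) (((a:ℝ)+1)/2), G_rec' a b, ih]
  have hc : ((b:ℝ)+1)/((a:ℝ)+(b:ℝ)+2) = (((b:ℝ)+1)/2)/((((b:ℝ)+1)/2)+(((a:ℝ)+1)/2)) := by
    have h1 : ((a:ℝ)+(b:ℝ)+2) ≠ 0 := by positivity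
    have h2 : (((b:ℝ)+1)/2)+(((a:ℝ)+1)/2) ≠ 0 := by positivity
    rw [div_eq_div_iff h1 h2]
    ring
  rw [← hc]
  ring

lemma key (a b : ℕ) :
    (∫ x in (0:ℝ)..(Real.pi/2), Real.sin x ^ a * Real.cos x ^ b) =
      1/2 * Beta (((a:ℝ)+1)/2) (((b:ℝ)+1)/2) := by
  have sqrtpi : Real.sqrt Real.pi * Real.sqrt Real.pi = Real.pi :=
    Real.mul_self_sqrt Real.pi_pos.le
  have g32 : Real.Gamma (3/2 : ℝ) = Real.sqrt Real.pi / 2 := by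
    have : (3/2 : ℝ) = 1/2 + 1 := by norm_num
    rw [this, Real.Gamma_add_one (by norm_num), Real.Gamma_one_half_eq]
    ring
  have g2 : Real.Gamma (2 : ℝ) = 1 := by
    rw [show (2:ℝ) = 1 + 1 by norm_num, Real.Gamma_add_one one_ne_zero, Real.Gamma_one]
    ring
  induction a using Nat.twoStepInduction generalizing b with
  | zero =>
    induction b using Nat.twoStepInduction with
    | zero =>
      have h : (∫ x in (0:ℝ)..(Real.pi/2), Real.sin x ^ 0 * Real.cos x ^ 0) = Real.pi/2 := by
        simp
      rw [h]
      unfold Beta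
      norm_num [Real.Gamma_one_half_eq, Real.Gamma_one, sqrtpi]
      ring
    | one =>
      have h : (∫ x in (0:ℝ)..(Real.pi/2), Real.sin x ^ 0 * Real.cos x ^ 1) = 1 := by
        simp [integral_cos]
      rw [h]
      unfold Beta
      have hpos : Real.sqrt Real.pi ≠ 0 := by positivity
      norm_num [Real.Gamma_one_half_eq, Real.Gamma_one, g32]
      field_simp
    | more b ih _ => exact key_step 0 b ih
  | one =>
    induction b using Nat.twoStepInduction with
    | zero =>
      have h : (∫ x in (0:ℝ)..(Real.pi/2), Real.sin x ^ 1 * Real.cos x ^ 0) = 1 := by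
        simp [integral_sin]
      rw [h]
      unfold Beta
      have hpos : Real.sqrt Real.pi ≠ 0 := by positivity
      norm_num [Real.Gamma_one_half_eq, Real.Gamma_one, g32]
      field_simp
    | one =>
      have h : (∫ x in (0:ℝ)..(Real.pi/2), Real.sin x ^ 1 * Real.cos x ^ 1) = 1/2 := by
        simp [integral_sin_mul_cos₁]
      rw [h]
      unfold Beta
      norm_num [Real.Gamma_one, g2]
    | more b ih _ => exact key_step 1 b ih
  | more a ih _ =>
    rw [G_rec a b, ih b]
    have hx : (0:ℝ) < ((a:ℝ)+1)/2 := by positivity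
    have hy : (0:ℝ) < ((b:ℝ)+1)/2 := by positivity
    have hcast : (((a+2:ℕ):ℝ)+1)/2 = ((a:ℝ)+1)/2 + 1 := by push_cast; ring
    rw [hcast, Beta_rec hx hy]
    have hc : ((a:ℝ)+1)/((a:ℝ)+(b:ℝ)+2) = (((a:ℝ)+1)/2)/((((a:ℝ)+1)/2)+(((b:ℝ)+1)/2)) := by
      have h1 : ((a:ℝ)+(b:ℝ)+2) ≠ 0 := by positivity
      have h2 : (((a:ℝ)+1)/2)+(((b:ℝ)+1)/2) ≠ 0 := by positivity
      rw [div_eq_div_iff h1 h2]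
      ring
    rw [← hc]
    ring

/-- for all integers `m1 ≥ 2`, `m2 ≥ 1`,
`∫₀^{π/4} sin^{m1}(2x)·cos^{m2}(2x)/sin²x dx
  = (1/2)·[B((m1−1)/2, (m2+1)/2) + B((m1−1)/2, (m2+2)/2)]`. -/
theorem integral_K1_eq_beta (m1 m2 : ℕ) (hm1 : 2 ≤ m1) (hm2 : 1 ≤ m2) :
    ∫ x in (0 : ℝ)..(Real.pi / 4),
        Real.sin (2 * x) ^ m1 * Real.cos (2 * x) ^ m2 / Real.sin x ^ 2 =
      (1 / 2) * (Beta (((m1 : ℝ) - 1) / 2) (((m2 : ℝ) + 1) / 2) +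
        Beta (((m1 : ℝ) - 1) / 2) (((m2 : ℝ) + 2) / 2)) := by
  obtain ⟨k, rfl⟩ : ∃ k, m1 = k + 2 := ⟨m1 - 2, by omega⟩
  -- Step 1: pointwise rewrite on (0, π/4]
  have step1 : ∫ x in (0 : ℝ)..(Real.pi / 4),
        Real.sin (2 * x) ^ (k+2) * Real.cos (2 * x) ^ m2 / Real.sin x ^ 2 =
      ∫ x in (0 : ℝ)..(Real.pi / 4),
        (2 * (Real.sin (2*x) ^ k * Real.cos (2*x) ^ m2)
          + 2 * (Real.sin (2*x) ^ k * Real.cos (2*x) ^ (m2+1))) := by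
    apply intervalIntegral.integral_congr_ae
    filter_upwards with x hx
    rw [Set.uIoc_of_le (by positivity : (0:ℝ) ≤ Real.pi/4)] at hx
    have hx0 : 0 < x := hx.1
    have hxpi : x < Real.pi := lt_of_le_of_lt hx.2 (by linarith [Real.pi_pos])
    have hs : Real.sin x ≠ 0 := (Real.sin_pos_of_pos_of_lt_pi hx0 hxpi).ne'
    have h2 : Real.sin (2*x) = 2 * Real.sin x * Real.cos x := Real.sin_two_mul x
    have h3 : Real.cos (2*x) = 2 * Real.cos x ^ 2 - 1 := Real.cos_two_mul x
    rw [h2, h3]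
    field_simp
    ring
  rw [step1]
  have intA : IntervalIntegrable (fun x => 2 * (Real.sin (2*x) ^ k * Real.cos (2*x) ^ m2))
      MeasureTheory.volume 0 (Real.pi/4) := by apply Continuous.intervalIntegrable; fun_prop
  have intB : IntervalIntegrable (fun x => 2 * (Real.sin (2*x) ^ k * Real.cos (2*x) ^ (m2+1)))
      MeasureTheory.volume 0 (Real.pi/4) := by apply Continuous.intervalIntegrable; fun_prop
  rw [intervalIntegral.integral_add intA intB]
  -- Step 2: substitution u = 2x
  have subst : ∀ n : ℕ, (∫ x in (0:ℝ)..(Real.pi/4),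
        2 * (Real.sin (2*x) ^ k * Real.cos (2*x) ^ n)) =
      ∫ u in (0:ℝ)..(Real.pi/2), Real.sin u ^ k * Real.cos u ^ n := by
    intro n
    rw [intervalIntegral.integral_const_mul]
    have := intervalIntegral.integral_comp_mul_left
      (fun u => Real.sin u ^ k * Real.cos u ^ n) (two_ne_zero) (a := 0) (b := Real.pi/4)
    rw [this]
    have : (2:ℝ) * (Real.pi/4) = Real.pi/2 := by ring
    rw [this]
    simp [smul_eq_mul]
  rw [subst m2, subst (m2+1), key k m2, key k (m2+1)]
  have hk : ((k:ℝ)+1) = ((k:ℝ)+2) - 1 := by ring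
  have h1 : (((k+2:ℕ):ℝ) - 1)/2 = ((k:ℝ)+1)/2 := by push_cast; ring
  have h2 : (((m2:ℝ))+2)/2 = (((m2+1:ℕ):ℝ)+1)/2 := by push_cast; ring
  rw [h1, h2]
  ring
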